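/- In every finite n-person game (A_i, u_i)_{i∈N}, the conditional extension (S_i, U_i)_{i∈N} has a pure conditional strategy equilibrium: there exists a conditional strategy profile s* such that for every player i and every conditional strategy s'_i of i, U_i(s*) ≥ U_i(s'_i, s*_{-i}). -/

import Mathlib

namespace CondStrat

open Function
open scoped Classical

/-- A fixed point of a pure conditional strategy profile. -/
def FixPt {N : Type*} {A : N → Type*}
    (s : ∀ i, (∀ j, j ≠ i → A j) → A i) (a : ∀ i, A i) : Prop :=
  ∀ i, s i (fun j _ => a j) = a i

/-- `a` is a distinguished fixed point of `s`: a fixed point whose payoffs weakly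
Pareto dominate those of every fixed point of `s`.  A profile `s` is an
*agreement* iff it admits such a fixed point. -/
def BestFixPt {N : Type*} {A : N → Type*} (u : N → (∀ i, A i) → ℝ)
    (s : ∀ i, (∀ j, j ≠ i → A j) → A i) (a : ∀ i, A i) : Prop :=
  FixPt s a ∧ ∀ a', FixPt s a' → ∀ i, u i a' ≤ u i a

/-- The payoff of player `i` in the conditional extension: the payoff at the
distinguished fixed point if `s` is an agreement, and `0` otherwise.  (Any two
distinguished fixed points yield the same payoffs, so this is well defined.) -/
noncomputable def U {N : Type*} {A : N → Type*} (u : N → (∀ i, A i) → ℝ)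
    (s : ∀ i, (∀ j, j ≠ i → A j) → A i) (i : N) : ℝ :=
  if h : ∃ a, BestFixPt u s a then u i h.choose else 0

/-- Conditional strategy equilibrium: no unilaterally profitable deviation. -/
def CSE {N : Type*} {A : N → Type*} [DecidableEq N] (u : N → (∀ i, A i) → ℝ)
    (s : ∀ i, (∀ j, j ≠ i → A j) → A i) : Prop :=
  ∀ (i : N) (s' : (∀ j, j ≠ i → A j) → A i), U u (Function.update s i s') i ≤ U u s i

/-- Strong conditional equilibrium: no nonempty coalition has a joint deviation
making all of its members strictly better off. -/
def StrongCE {N : Type*} {A : N → Type*} [DecidableEq N] (u : N → (∀ i, A i) → ℝ)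
    (s : ∀ i, (∀ j, j ≠ i → A j) → A i) : Prop :=
  ¬ ∃ (C : Finset N) (s' : ∀ i, (∀ j, j ≠ i → A j) → A i),
      C.Nonempty ∧ (∀ j ∉ C, s' j = s j) ∧ ∀ i ∈ C, U u s i < U u s' i

/-! ### Auxiliary construction for the existence theorem.

We order the players via `rk : N → ℕ`.  The distinguished profile `astar` is
built by recursion along this order: player `i` plays a "maxmin" action,
maximizing (over `x`) the minimum of `u i` over all profiles that agree with
`astar` below `i` and play `x` at `i`.  The equilibrium strategy `sstar`:
each player plays their `astar` action unless some player of smaller rank has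
deviated, in which case they play their component of a chosen minimizing
("punishment") profile against the least-rank deviator. -/

section Aux

variable {N : Type*} {A : N → Type*}
variable [Fintype N] [DecidableEq N] [∀ i, Fintype (A i)] [∀ i, Nonempty (A i)]

/-- A rank function on players. -/
noncomputable def rk (i : N) : ℕ := (Fintype.equivFin N i : ℕ)

lemma rk_inj : Function.Injective (rk (N := N)) := fun a b h =>
  (Fintype.equivFin N).injective (Fin.val_injective h)

lemma rk_ne {i j : N} (h : rk i < rk j) : i ≠ j := by
  intro e; subst e; exact lt_irrefl _ h

/-- Well-foundedness of the rank order. -/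
noncomputable def wfrk : WellFounded (fun i j : N => rk i < rk j) :=
  InvImage.wf rk (Nat.lt_wfRel.wf)

/-- Profiles agreeing with a partial profile `p` below `i` and equal to `x` at `i`. -/
def Pz (i : N) (p : ∀ j, rk j < rk i → A j) (x : A i) (z : ∀ j, A j) : Prop :=
  (∀ j (h : rk j < rk i), z j = p j h) ∧ z i = x

lemma Pz_nonempty (i : N) (p : ∀ j, rk j < rk i → A j) (x : A i) :
    ∃ z, Pz i p x z := by
  refine ⟨fun j => if h : rk j < rk i then p j h else
    Function.update (fun l => Classical.arbitrary (A l)) i x j, fun j h => dif_pos h, ?_⟩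
  show (if h : rk i < rk i then _ else Function.update (fun l => Classical.arbitrary (A l)) i x i) = x
  rw [dif_neg (lt_irrefl _), Function.update_self]

lemma minExists (u : N → (∀ i, A i) → ℝ) (i : N) (p : ∀ j, rk j < rk i → A j) (x : A i) :
    ∃ z, Pz i p x z ∧ ∀ z', Pz i p x z' → u i z ≤ u i z' := by
  obtain ⟨z₀, hz₀⟩ := Pz_nonempty i p x
  obtain ⟨z, hz, hmin⟩ := Finset.exists_min_image (Finset.univ.filter (Pz i p x)) (u i)
    ⟨z₀, Finset.mem_filter.2 ⟨Finset.mem_univ _, hz₀⟩⟩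
  exact ⟨z, (Finset.mem_filter.1 hz).2,
    fun z' hz' => hmin z' (Finset.mem_filter.2 ⟨Finset.mem_univ _, hz'⟩)⟩

/-- A chosen minimizer of `u i` over `Pz i p x`. -/
noncomputable def mpro (u : N → (∀ i, A i) → ℝ) (i : N)
    (p : ∀ j, rk j < rk i → A j) (x : A i) : ∀ j, A j :=
  (minExists u i p x).choose

lemma mpro_spec (u : N → (∀ i, A i) → ℝ) (i : N) (p : ∀ j, rk j < rk i → A j) (x : A i) :
    Pz i p x (mpro u i p x) ∧ ∀ z', Pz i p x z' → u i (mpro u i p x) ≤ u i z' :=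
  (minExists u i p x).choose_spec

lemma maxExists (u : N → (∀ i, A i) → ℝ) (i : N) (p : ∀ j, rk j < rk i → A j) :
    ∃ x : A i, ∀ y : A i, u i (mpro u i p y) ≤ u i (mpro u i p x) := by
  obtain ⟨x, _, hx⟩ := Finset.exists_max_image (Finset.univ : Finset (A i))
    (fun y => u i (mpro u i p y)) Finset.univ_nonempty
  exact ⟨x, fun y => hx y (Finset.mem_univ _)⟩

/-- Recursion step: a maxmin action for player `i` given earlier choices. -/
noncomputable def step (u : N → (∀ i, A i) → ℝ) (i : N) (p : ∀ j, rk j < rk i → A j) : A i :=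
  (maxExists u i p).choose

/-- The distinguished action profile. -/
noncomputable def astar (u : N → (∀ i, A i) → ℝ) : ∀ i : N, A i :=
  wfrk.fix (step u)

lemma astar_unfold (u : N → (∀ i, A i) → ℝ) (i : N) :
    astar u i = step u i (fun j _ => astar u j) :=
  WellFounded.fix_eq wfrk (step u) i

/-- The punishment profile against deviator `i` playing `x`. -/
noncomputable def pun (u : N → (∀ i, A i) → ℝ) (i : N) (x : A i) : ∀ j, A j :=
  mpro u i (fun j _ => astar u j) x

lemma pun_lt (u : N → (∀ i, A i) → ℝ) (i : N) (x : A i) {j : N} (h : rk j < rk i) :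
    pun u i x j = astar u j :=
  (mpro_spec u i (fun j _ => astar u j) x).1.1 j h

lemma pun_self (u : N → (∀ i, A i) → ℝ) (i : N) (x : A i) :
    pun u i x i = x :=
  (mpro_spec u i (fun j _ => astar u j) x).1.2

lemma pun_le_astar (u : N → (∀ i, A i) → ℝ) (i : N) (x : A i) :
    u i (pun u i x) ≤ u i (astar u) := by
  have h1 : u i (pun u i x) ≤ u i (pun u i (astar u i)) := by
    have := (maxExists u i (fun j _ => astar u j)).choose_spec x
    rw [← step] at this
    rw [← astar_unfold u i] at this
    exact this
  have h2 : u i (pun u i (astar u i)) ≤ u i (astar u) :=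
    (mpro_spec u i (fun j _ => astar u j) (astar u i)).2 (astar u) ⟨fun j h => rfl, rfl⟩
  exact h1.trans h2

/-- Extend a view `c` (of player `j`) to a full profile (junk at `j`). -/
noncomputable def ext (j : N) (c : ∀ l, l ≠ j → A l) : ∀ l, A l :=
  fun l => if h : l ≠ j then c l h else Classical.arbitrary _

lemma ext_apply (j : N) (c : ∀ l, l ≠ j → A l) {l : N} (h : l ≠ j) :
    ext j c l = c l h := dif_pos h

/-- The equilibrium conditional strategy profile. -/
noncomputable def sstar (u : N → (∀ i, A i) → ℝ) :
    ∀ j, (∀ l, l ≠ j → A l) → A j := fun j c =>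
  if h : {l | rk l < rk j ∧ ext j c l ≠ astar u l}.Nonempty then
    pun u (wfrk.min _ h) (ext j c (wfrk.min _ h)) j
  else astar u j

lemma sstar_eq (u : N → (∀ i, A i) → ℝ) (j : N) (c : ∀ l, l ≠ j → A l)
    (h : ¬ {l | rk l < rk j ∧ ext j c l ≠ astar u l}.Nonempty) :
    sstar u j c = astar u j := dif_neg h

lemma astar_fix (u : N → (∀ i, A i) → ℝ) : FixPt (sstar u) (astar u) := by
  intro j
  refine sstar_eq u j _ ?_
  rintro ⟨l, hl1, hl2⟩
  exact hl2 (ext_apply j _ (rk_ne hl1))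

/-- Key lemma: any fixed point of a unilateral deviation by `i` from `sstar`
gives `i` at most `u i (astar u)`. -/
lemma key (u : N → (∀ i, A i) → ℝ) (i : N)
    (s' : (∀ j, j ≠ i → A j) → A i) (b : ∀ j, A j)
    (hb : FixPt (Function.update (sstar u) i s') b) :
    u i b ≤ u i (astar u) := by
  have hbj : ∀ j, j ≠ i → sstar u j (fun l _ => b l) = b j := by
    intro j hj
    have := hb j
    rwa [Function.update_of_ne hj] at this
  by_cases hx : b i = astar u i
  · -- every coordinate equals astar
    have hall : ∀ j, b j = astar u j := by
      intro j
      refine wfrk.induction (C := fun j => b j = astar u j) j ?_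
      intro j IH
      by_cases hji : j = i
      · subst hji; exact hx
      · rw [← hbj j hji]
        refine sstar_eq u j _ ?_
        rintro ⟨l, hl1, hl2⟩
        rw [ext_apply j _ (rk_ne hl1)] at hl2
        exact hl2 (IH l hl1)
    have : b = astar u := funext hall
    rw [this]
  · -- b is the punishment profile against i
    have hB : ∀ j, rk j < rk i → b j = astar u j := by
      intro j
      refine wfrk.induction (C := fun j => rk j < rk i → b j = astar u j) j ?_
      intro j IH hji
      rw [← hbj j (rk_ne hji)]
      refine sstar_eq u j _ ?_
      rintro ⟨l, hl1, hl2⟩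
      rw [ext_apply j _ (rk_ne hl1)] at hl2
      exact hl2 (IH l hl1 (hl1.trans hji))
    have hC : ∀ j, rk i < rk j → b j = pun u i (b i) j := by
      intro j hij
      have hjne : j ≠ i := (rk_ne hij).symm
      have hine : i ≠ j := rk_ne hij
      rw [← hbj j hjne]
      have hiS : i ∈ {l | rk l < rk j ∧ ext j (fun l _ => b l) l ≠ astar u l} := by
        refine ⟨hij, ?_⟩
        rw [ext_apply j _ hine]
        exact hx
      have hS : {l | rk l < rk j ∧ ext j (fun l _ => b l) l ≠ astar u l}.Nonempty := ⟨i, hiS⟩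
      show sstar u j (fun l _ => b l) = pun u i (b i) j
      rw [sstar, dif_pos hS]
      set k := wfrk.min {l | rk l < rk j ∧ ext j (fun l _ => b l) l ≠ astar u l} hS with hkdef
      have hkmem := wfrk.min_mem {l | rk l < rk j ∧ ext j (fun l _ => b l) l ≠ astar u l} hS
      rw [← hkdef] at hkmem
      obtain ⟨hk1, hk2⟩ := hkmem
      have hki : k = i := by
        rcases lt_trichotomy (rk k) (rk i) with h | h | h
        · exfalso
          rw [ext_apply j _ (rk_ne hk1)] at hk2
          exact hk2 (hB k h)
        · exact rk_inj h
        · exact absurd h (wfrk.not_lt_min _ hiS)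
      rw [hki]
      rw [ext_apply j _ hine]
    have hall : b = pun u i (b i) := by
      funext j
      rcases lt_trichotomy (rk j) (rk i) with h | h | h
      · rw [hB j h]; exact (pun_lt u i (b i) h).symm
      · have : j = i := rk_inj h
        subst this
        exact (pun_self u j (b j)).symm
      · exact hC j h
    rw [hall]
    exact pun_le_astar u i (b i)

lemma U_sstar (u : N → (∀ i, A i) → ℝ) (i : N) :
    U u (sstar u) i = u i (astar u) := by
  have hbest : BestFixPt u (sstar u) (astar u) := by
    refine ⟨astar_fix u, fun a' ha' j => ?_⟩
    refine key u j (sstar u j) a' ?_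
    rwa [Function.update_eq_self]
  have hex : ∃ a, BestFixPt u (sstar u) a := ⟨astar u, hbest⟩
  rw [U, dif_pos hex]
  refine le_antisymm ?_ ?_
  · refine key u i (sstar u i) hex.choose ?_
    have := hex.choose_spec.1
    rwa [Function.update_eq_self]
  · exact hex.choose_spec.2 (astar u) (astar_fix u) i

end Aux

/-- every finite n-person game has a pure conditional strategy
equilibrium in its conditional extension. -/
theorem cse_exists {N : Type*} {A : N → Type*}
    [Fintype N] [DecidableEq N] [∀ i, Fintype (A i)] [∀ i, Nonempty (A i)]
    (u : N → (∀ i, A i) → ℝ) (hu : ∀ i a, 0 ≤ u i a) :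
    ∃ s : ∀ i, (∀ j, j ≠ i → A j) → A i, CSE u s := by
  refine ⟨sstar u, ?_⟩
  intro i s'
  rw [U_sstar u i]
  rw [U]
  split_ifs with h
  · exact key u i s' h.choose h.choose_spec.1
  · exact hu i (astar u)

end CondStrat
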